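/- The word xyzyx is an isoterm for the 6-element Brandt monoid B_2^1: any word v over {x, y, z} such that the identity xyzyx ≈ v holds in B_2^1 must equal xyzyx. -/

import Mathlib

/-- The 6-element Brandt monoid `B₂¹` realized as a set of `2×2` matrices over `ℚ`. -/
def B21 : Set (Matrix (Fin 2) (Fin 2) ℚ) :=
  {0, Matrix.single 0 0 1, Matrix.single 0 1 1,
   Matrix.single 1 0 1, Matrix.single 1 1 1, 1}

/-! ### Auxiliary material -/

/-- `E₁₂`. -/
noncomputable def MA : Matrix (Fin 2) (Fin 2) ℚ := !![0,1;0,0]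
/-- `E₂₁`. -/
noncomputable def MB : Matrix (Fin 2) (Fin 2) ℚ := !![0,0;1,0]

lemma MA_std : Matrix.single (0 : Fin 2) (1 : Fin 2) (1 : ℚ) = MA := by
  ext i j; fin_cases i <;> fin_cases j <;> simp [MA, Matrix.single]

lemma MB_std : Matrix.single (1 : Fin 2) (0 : Fin 2) (1 : ℚ) = MB := by
  ext i j; fin_cases i <;> fin_cases j <;> simp [MB, Matrix.single]

lemma MA_mem : MA ∈ B21 := by
  simp only [B21, Set.mem_insert_iff, Set.mem_singleton_iff]
  exact Or.inr (Or.inr (Or.inl MA_std.symm))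

lemma MB_mem : MB ∈ B21 := by
  simp only [B21, Set.mem_insert_iff, Set.mem_singleton_iff]
  exact Or.inr (Or.inr (Or.inr (Or.inl MB_std.symm)))

lemma one_mem : (1 : Matrix (Fin 2) (Fin 2) ℚ) ∈ B21 := by
  simp [B21]

lemma fin3_cases (i : Fin 3) : i = 0 ∨ i = 1 ∨ i = 2 := by
  fin_cases i <;> simp

lemma MA_sq : MA * MA = 0 := by
  ext i j; fin_cases i <;> fin_cases j <;>
    simp [MA, Matrix.mul_apply, Fin.sum_univ_two]

lemma MA_ne_one : MA ≠ 1 := by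
  intro h; have := congrFun (congrFun h 0) 0
  simp [MA, Matrix.one_apply] at this

lemma MA_ne_zero : MA ≠ 0 := by
  intro h; have := congrFun (congrFun h 0) 1
  simp [MA] at this

lemma MABA : MA * (MB * MA) = MA := by
  ext i j; fin_cases i <;> fin_cases j <;>
    simp [MA, MB, Matrix.mul_apply, Fin.sum_univ_two]

lemma MA_pow_add_two (n : ℕ) : MA ^ (n + 2) = 0 := by
  rw [pow_add, pow_two, MA_sq, mul_zero]

lemma MA_pow_eq_MA {n : ℕ} (h : MA ^ n = MA) : n = 1 := by
  match n with
  | 0 => exact absurd h.symm MA_ne_one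
  | 1 => rfl
  | n + 2 => rw [MA_pow_add_two] at h; exact absurd h.symm MA_ne_zero

/-- Product of a word whose letters other than `j` are sent to `1` and `j` to `MA`. -/
lemma prod_pow_count (v : List (Fin 3)) (g : Fin 3 → Matrix (Fin 2) (Fin 2) ℚ)
    (j : Fin 3) (hj : g j = MA) (h1 : ∀ i ∈ v, i ≠ j → g i = 1) :
    (v.map g).prod = MA ^ (v.count j) := by
  induction v with
  | nil => simp
  | cons a t ih =>
    have ht : ∀ i ∈ t, i ≠ j → g i = 1 := fun i hi => h1 i (List.mem_cons_of_mem a hi)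
    by_cases haj : a = j
    · subst haj
      simp [List.count_cons_self, hj, ih ht, pow_succ']
    · rw [List.map_cons, List.prod_cons, h1 a List.mem_cons_self haj, one_mul,
        ih ht, List.count_cons_of_ne haj]

lemma key_equation {a b : ℕ} (h : MA ^ a * MB * MA ^ b = MA) : a = 1 ∧ b = 1 := by
  match a with
  | n + 2 => rw [MA_pow_add_two, zero_mul, zero_mul] at h; exact absurd h MA_ne_zero.symm
  | 0 =>
    match b with
    | 0 =>
      exfalso; simp only [pow_zero, pow_one, one_mul, mul_one] at h
      have := congrFun (congrFun h 0) 1; simp [MA, MB] at this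
    | 1 =>
      exfalso; simp only [pow_zero, pow_one, one_mul, mul_one] at h
      have := congrFun (congrFun h 0) 1
      simp [MA, MB, Matrix.mul_apply, Fin.sum_univ_two] at this
    | n + 2 =>
      rw [MA_pow_add_two, mul_zero] at h; exact absurd h MA_ne_zero.symm
  | 1 =>
    match b with
    | 0 =>
      exfalso; simp only [pow_zero, pow_one, one_mul, mul_one] at h
      have := congrFun (congrFun h 0) 1
      simp [MA, MB, Matrix.mul_apply, Fin.sum_univ_two] at this
    | 1 => exact ⟨rfl, rfl⟩
    | n + 2 =>
      rw [MA_pow_add_two, mul_zero] at h; exact absurd h MA_ne_zero.symm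

lemma length_eq_counts (l : List (Fin 3)) :
    l.length = l.count 0 + l.count 1 + l.count 2 := by
  induction l with
  | nil => simp
  | cons a t ih => fin_cases a <;> simp [List.count_cons, ih] <;> omega

lemma pair_cases {a b : Fin 3} (h0 : ([a, b] : List (Fin 3)).count 0 = 1)
    (h1 : ([a, b] : List (Fin 3)).count 1 = 1) :
    (a = 0 ∧ b = 1) ∨ (a = 1 ∧ b = 0) := by
  fin_cases a <;> fin_cases b <;> simp_all [List.count_cons]

/-- The word `xyzyx` (with `x := 0`, `y := 1`, `z := 2`) is an isoterm for the Brandt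
monoid `B₂¹`: any word `v` over `{x, y, z}` such that `xyzyx ≈ v` holds under every
substitution of elements of `B₂¹` must equal `xyzyx`. -/
theorem xyzyx_isoterm_for_B21 :
    ∀ v : List (Fin 3),
      (∀ φ : Fin 3 → Matrix (Fin 2) (Fin 2) ℚ, (∀ i, φ i ∈ B21) →
        (([0, 1, 2, 1, 0] : List (Fin 3)).map φ).prod = (v.map φ).prod) →
      v = [0, 1, 2, 1, 0] := by
  intro v H
  -- Step 1: exactly one occurrence of the letter 2.
  have memA : ∀ i, (![1, 1, MA] : Fin 3 → Matrix (Fin 2) (Fin 2) ℚ) i ∈ B21 := by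
    intro i; fin_cases i
    exacts [one_mem, one_mem, MA_mem]
  have h2 := H ![1, 1, MA] memA
  have hL2 : (([0, 1, 2, 1, 0] : List (Fin 3)).map ![1, 1, MA]).prod = MA := by simp
  rw [hL2, prod_pow_count v ![1, 1, MA] 2 rfl
      (by intro i _ hne; rcases fin3_cases i with rfl | rfl | rfl
          · rfl
          · rfl
          · exact absurd rfl hne)] at h2
  have hc2 : v.count 2 = 1 := MA_pow_eq_MA h2.symm
  -- split v at the unique 2
  have hmem2 : (2 : Fin 3) ∈ v := by
    rw [← List.count_pos_iff, hc2]; norm_num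
  obtain ⟨v1, v2, rfl⟩ := List.append_of_mem hmem2
  rw [List.count_append, List.count_cons_self] at hc2
  have h2v1 : v1.count 2 = 0 := by omega
  have h2v2 : v2.count 2 = 0 := by omega
  have hv1not2 : ∀ i ∈ v1, i ≠ 2 := by
    intro i hi; rintro rfl
    exact (List.count_pos_iff.mpr hi).ne' h2v1
  have hv2not2 : ∀ i ∈ v2, i ≠ 2 := by
    intro i hi; rintro rfl
    exact (List.count_pos_iff.mpr hi).ne' h2v2
  -- Step 2: substitution x ↦ MA, y ↦ 1, z ↦ MB: one x on each side of z.
  have mem1 : ∀ i, (![MA, 1, MB] : Fin 3 → Matrix (Fin 2) (Fin 2) ℚ) i ∈ B21 := by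
    intro i; fin_cases i
    exacts [MA_mem, one_mem, MB_mem]
  have hx := H ![MA, 1, MB] mem1
  have hLx : (([0, 1, 2, 1, 0] : List (Fin 3)).map ![MA, 1, MB]).prod = MA := by
    simpa using MABA
  rw [hLx, List.map_append, List.prod_append, List.map_cons, List.prod_cons] at hx
  rw [prod_pow_count v1 ![MA, 1, MB] 0 rfl
      (by intro i hi hne; have h2i := hv1not2 i hi
          rcases fin3_cases i with rfl | rfl | rfl
          · exact absurd rfl hne
          · rfl
          · exact absurd rfl h2i)] at hx
  rw [prod_pow_count v2 ![MA, 1, MB] 0 rfl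
      (by intro i hi hne; have h2i := hv2not2 i hi
          rcases fin3_cases i with rfl | rfl | rfl
          · exact absurd rfl hne
          · rfl
          · exact absurd rfl h2i)] at hx
  rw [show (![MA, 1, MB] : Fin 3 → Matrix (Fin 2) (Fin 2) ℚ) 2 = MB from rfl,
    ← mul_assoc] at hx
  obtain ⟨h0v1, h0v2⟩ := key_equation hx.symm
  -- Step 3: substitution x ↦ 1, y ↦ MA, z ↦ MB: one y on each side of z.
  have mem2 : ∀ i, (![1, MA, MB] : Fin 3 → Matrix (Fin 2) (Fin 2) ℚ) i ∈ B21 := by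
    intro i; fin_cases i
    exacts [one_mem, MA_mem, MB_mem]
  have hy := H ![1, MA, MB] mem2
  have hLy : (([0, 1, 2, 1, 0] : List (Fin 3)).map ![1, MA, MB]).prod = MA := by
    simpa using MABA
  rw [hLy, List.map_append, List.prod_append, List.map_cons, List.prod_cons] at hy
  rw [prod_pow_count v1 ![1, MA, MB] 1 rfl
      (by intro i hi hne; have h2i := hv1not2 i hi
          rcases fin3_cases i with rfl | rfl | rfl
          · rfl
          · exact absurd rfl hne
          · exact absurd rfl h2i)] at hy
  rw [prod_pow_count v2 ![1, MA, MB] 1 rfl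
      (by intro i hi hne; have h2i := hv2not2 i hi
          rcases fin3_cases i with rfl | rfl | rfl
          · rfl
          · exact absurd rfl hne
          · exact absurd rfl h2i)] at hy
  rw [show (![1, MA, MB] : Fin 3 → Matrix (Fin 2) (Fin 2) ℚ) 2 = MB from rfl,
    ← mul_assoc] at hy
  obtain ⟨h1v1, h1v2⟩ := key_equation hy.symm
  -- Step 4: v1 and v2 are two-letter words
  have hlen1 : v1.length = 2 := by rw [length_eq_counts, h0v1, h1v1, h2v1]
  have hlen2 : v2.length = 2 := by rw [length_eq_counts, h0v2, h1v2, h2v2]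
  obtain ⟨a, b, rfl⟩ := List.length_eq_two.mp hlen1
  obtain ⟨c, d, rfl⟩ := List.length_eq_two.mp hlen2
  -- Step 5: final substitution x ↦ MA, y ↦ MB, z ↦ MA kills the wrong orders.
  have mem3 : ∀ i, (![MA, MB, MA] : Fin 3 → Matrix (Fin 2) (Fin 2) ℚ) i ∈ B21 := by
    intro i; fin_cases i
    exacts [MA_mem, MB_mem, MA_mem]
  have h3 := H ![MA, MB, MA] mem3
  rcases pair_cases h0v1 h1v1 with ⟨rfl, rfl⟩ | ⟨rfl, rfl⟩ <;>
    rcases pair_cases h0v2 h1v2 with ⟨rfl, rfl⟩ | ⟨rfl, rfl⟩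
  · exfalso
    have := congrFun (congrFun h3 0) 1
    simp [MA, MB, Matrix.mul_apply, Fin.sum_univ_two] at this
  · rfl
  · exfalso
    have := congrFun (congrFun h3 0) 1
    simp [MA, MB, Matrix.mul_apply, Fin.sum_univ_two] at this
  · exfalso
    have := congrFun (congrFun h3 0) 1
    simp [MA, MB, Matrix.mul_apply, Fin.sum_univ_two] at this
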